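/- The exponential generating function of the signed derangement numbers satisfies Σ_{n ≥ 0} D_n^± · x^n / n! = e^{−x} / (1 − 2x) as an identity of formal power series over ℚ; that is, the formal power series with n-th coefficient D_n^±/n! equals the product of the power series exp(−X) with the (multiplicative) inverse of the power series 1 − 2X. -/

import Mathlib

/-- The signed derangement number `D_m^±`: the number of signed permutations
`(σ, ε)` on `m` elements with no fixed point, where an index `i` is a fixed point
if `σ(i) = i` and `ε(i) = +1` (encoded as `true`). -/
noncomputable def signedDerangementCount (m : ℕ) : ℕ :=
  Nat.card {p : Equiv.Perm (Fin m) × (Fin m → Bool) //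
    ∀ i, ¬(p.1 i = i ∧ p.2 i = true)}


open Equiv Finset

def fiberEquiv (m : ℕ) (A : Finset (Fin m)) :
    {q : {p : Equiv.Perm (Fin m) × (Fin m → Bool) //
        ∀ i, ¬(p.1 i = i ∧ p.2 i = true)} //
      Finset.univ.filter (fun i => q.1.1 i ≠ i) = A} ≃
    (derangements {x // x ∈ A} × ({x // x ∈ A} → Bool)) where
  toFun q := by
    have hA : ∀ i, i ∈ A ↔ q.1.1.1 i ≠ i := fun i => by
      rw [← Finset.ext_iff.mp q.2 i]; simp
    refine ⟨⟨q.1.1.1.subtypePerm (fun x => ?_), fun x => ?_⟩, fun x => q.1.1.2 x.1⟩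
    · rw [hA x, hA (q.1.1.1 x), ne_eq, ne_eq, q.1.1.1.injective.eq_iff]
    · intro hx
      exact (hA x.1).1 x.2 (congrArg Subtype.val hx)
  invFun r := by
    refine ⟨⟨⟨Equiv.Perm.ofSubtype r.1.1,
      fun i => if h : i ∈ A then r.2 ⟨i, h⟩ else false⟩, ?_⟩, ?_⟩
    · rintro i ⟨h1, h2⟩
      by_cases h : i ∈ A
      · have := Equiv.Perm.ofSubtype_apply_of_mem r.1.1 h
        rw [h1] at this
        exact r.1.2 ⟨i, h⟩ (Subtype.ext this.symm)
      · simp only [dif_neg h] at h2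
        exact Bool.false_ne_true h2
    · ext i
      simp only [Finset.mem_filter, Finset.mem_univ, true_and]
      constructor
      · intro hi
        by_contra h
        exact hi (Equiv.Perm.ofSubtype_apply_of_not_mem r.1.1 h)
      · intro h
        rw [Equiv.Perm.ofSubtype_apply_of_mem r.1.1 h]
        intro hcon
        exact r.1.2 ⟨i, h⟩ (Subtype.ext hcon)
  left_inv q := by
    have hA : ∀ i, i ∈ A ↔ q.1.1.1 i ≠ i := fun i => by
      rw [← Finset.ext_iff.mp q.2 i]; simp
    apply Subtype.ext
    apply Subtype.ext
    refine Prod.ext ?_ ?_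
    · apply Equiv.ext
      intro i
      by_cases h : i ∈ A
      · exact Equiv.Perm.ofSubtype_apply_of_mem _ h
      · rw [Equiv.Perm.ofSubtype_apply_of_not_mem _ h]
        exact (not_not.1 (fun hh => h ((hA i).2 hh))).symm
    · funext i
      by_cases h : i ∈ A
      · simp only [dif_pos h]
      · simp only [dif_neg h]
        have hfix : q.1.1.1 i = i := not_not.1 (fun hh => h ((hA i).2 hh))
        have := q.1.2 i
        rcases Bool.eq_false_or_eq_true (q.1.1.2 i) with hb | hb
        · exact absurd ⟨hfix, hb⟩ this
        · exact hb.symm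
  right_inv r := by
    refine Prod.ext (Subtype.ext ?_) ?_
    · apply Equiv.ext
      intro x
      apply Subtype.ext
      simp only [Equiv.Perm.subtypePerm_apply]
      simpa using Equiv.Perm.ofSubtype_apply_of_mem r.1.1 x.2
    · funext x
      simp only [dif_pos x.2]

theorem signedDerangementCount_eq (m : ℕ) :
    signedDerangementCount m =
      ∑ k ∈ Finset.range (m + 1), m.choose k * (numDerangements k * 2 ^ k) := by
  classical
  rw [signedDerangementCount, Nat.card_eq_fintype_card]
  rw [Fintype.card_congr (Equiv.sigmaFiberEquiv
    (fun q : {p : Equiv.Perm (Fin m) × (Fin m → Bool) //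
        ∀ i, ¬(p.1 i = i ∧ p.2 i = true)} =>
      Finset.univ.filter (fun i => q.1.1 i ≠ i))).symm]
  rw [Fintype.card_sigma]
  have step : ∀ A : Finset (Fin m),
      Fintype.card {q : {p : Equiv.Perm (Fin m) × (Fin m → Bool) //
        ∀ i, ¬(p.1 i = i ∧ p.2 i = true)} //
          Finset.univ.filter (fun i => q.1.1 i ≠ i) = A} =
        numDerangements A.card * 2 ^ A.card := by
    intro A
    rw [Fintype.card_congr (fiberEquiv m A), Fintype.card_prod]
    congr 1
    · rw [card_derangements_eq_numDerangements, Fintype.card_coe]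
    · rw [Fintype.card_fun, Fintype.card_bool, Fintype.card_coe]
  simp_rw [step]
  rw [← Finset.powerset_univ, Finset.sum_powerset_apply_card
    (fun k => numDerangements k * 2 ^ k)]
  simp [Finset.card_univ, smul_eq_mul]

open PowerSeries

noncomputable def dser : PowerSeries ℚ :=
  PowerSeries.mk fun n => (numDerangements n : ℚ) / n.factorial

lemma dser_mul_one_sub_X :
    dser * (1 - PowerSeries.X) = PowerSeries.rescale (-1 : ℚ) (PowerSeries.exp ℚ) := by
  ext n
  rw [coeff_rescale, coeff_exp, mul_sub, mul_one, map_sub]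
  cases n with
  | zero => simp [dser]
  | succ n =>
    rw [coeff_succ_mul_X]
    simp only [dser, coeff_mk]
    have hd : ((numDerangements (n + 1) : ℚ)) =
        (n + 1) * (numDerangements n : ℚ) - (-1) ^ n := by
      exact_mod_cast congrArg (fun z : ℤ => (z : ℚ)) (numDerangements_succ n)
    have h1 : ((n + 1).factorial : ℚ) ≠ 0 := Nat.cast_ne_zero.2 (n + 1).factorial_ne_zero
    have h2 : ((n).factorial : ℚ) ≠ 0 := Nat.cast_ne_zero.2 n.factorial_ne_zero
    rw [hd]
    rw [Nat.factorial_succ]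
    push_cast
    field_simp
    ring

lemma mk_sdc_eq :
    PowerSeries.mk (fun n => (signedDerangementCount n : ℚ) / (n.factorial : ℚ)) =
      PowerSeries.rescale (2 : ℚ) dser * PowerSeries.exp ℚ := by
  ext n
  rw [coeff_mul, Finset.Nat.sum_antidiagonal_eq_sum_range_succ_mk, coeff_mk]
  rw [signedDerangementCount_eq]
  push_cast
  rw [Finset.sum_div]
  refine Finset.sum_congr rfl fun k hk => ?_
  have hkn : k ≤ n := Nat.lt_succ_iff.1 (Finset.mem_range.1 hk)
  rw [coeff_rescale, coeff_exp]
  simp only [dser, coeff_mk, Algebra.algebraMap_self, RingHom.id_apply]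
  rw [Nat.cast_choose ℚ hkn]
  have h1 : ((n).factorial : ℚ) ≠ 0 := Nat.cast_ne_zero.2 n.factorial_ne_zero
  have h2 : ((k).factorial : ℚ) ≠ 0 := Nat.cast_ne_zero.2 k.factorial_ne_zero
  have h3 : (((n - k)).factorial : ℚ) ≠ 0 := Nat.cast_ne_zero.2 (n - k).factorial_ne_zero
  field_simp

theorem statement19 :
    PowerSeries.mk (fun n => (signedDerangementCount n : ℚ) / (n.factorial : ℚ)) =
      PowerSeries.rescale (-1 : ℚ) (PowerSeries.exp ℚ) *
        (1 - 2 * PowerSeries.X : PowerSeries ℚ)⁻¹ := by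
  have hc : constantCoeff (1 - 2 * PowerSeries.X : PowerSeries ℚ) ≠ 0 := by
    simp
  rw [PowerSeries.eq_mul_inv_iff_mul_eq hc, mk_sdc_eq]
  have h2 : PowerSeries.rescale (2 : ℚ) dser * (1 - 2 * PowerSeries.X) =
      PowerSeries.rescale (-2 : ℚ) (PowerSeries.exp ℚ) := by
    have h := congrArg (PowerSeries.rescale (2 : ℚ)) dser_mul_one_sub_X
    rw [map_mul, map_sub, map_one, rescale_X, rescale_rescale] at h
    have hC : (PowerSeries.C (R := ℚ)) (2 : ℚ) = 2 := by
      rw [PowerSeries.C_eq_algebraMap, map_ofNat]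
    rw [hC] at h
    norm_num at h
    exact h
  calc PowerSeries.rescale (2 : ℚ) dser * PowerSeries.exp ℚ * (1 - 2 * PowerSeries.X)
      = PowerSeries.rescale (2 : ℚ) dser * (1 - 2 * PowerSeries.X) * PowerSeries.exp ℚ := by
        ring
    _ = PowerSeries.rescale (-2 : ℚ) (PowerSeries.exp ℚ) * PowerSeries.exp ℚ := by rw [h2]
    _ = PowerSeries.rescale (-1 : ℚ) (PowerSeries.exp ℚ) := by
        have h3 := exp_mul_exp_eq_exp_add (-2 : ℚ) 1
        norm_num at h3
        exact h3
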